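/- Let $n = 2k+1$ be odd, and let $E_i = E_{i,i+1} + E_{2k-i+1,2k-i+2}$ for $i < k$ and $E_k = \sqrt{2}(E_{k,k+1} + E_{k+1,k+2})$, with $F_i = E_i^t$. Then for all $i \in [1,k]$ and $t \in \mathbb{C}$, $\exp(tE_i)$ and $\exp(tF_i)$ belong to $G(\Omega_{2k+1}) = \{A : A\Omega_{2k+1}A^t = \Omega_{2k+1}\}$, the orthogonal group of the form $\Omega_{2k+1}$. -/

import Mathlib

open Matrix

/-- The anti-diagonal matrix `Ω_n = ∑ (-1)^(i+1) E_{i, n+1-i}`. -/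
def Omega (n : ℕ) : Matrix (Fin n) (Fin n) ℂ :=
  Matrix.of fun i j => if (i : ℕ) + (j : ℕ) = n - 1 then (-1 : ℂ) ^ (i : ℕ) else 0

/-- The Chevalley generator `E_i` of `𝔰𝔬_{2k+1}` (1-indexed `i ∈ [1,k]`):
`E_i = E_{i,i+1} + E_{2k-i+1, 2k-i+2}` for `i < k` and
`E_k = √2 (E_{k,k+1} + E_{k+1,k+2})`. -/
noncomputable def EgenB (k : ℕ) (i : ℕ) (h1 : 1 ≤ i) (h2 : i ≤ k) :
    Matrix (Fin (2 * k + 1)) (Fin (2 * k + 1)) ℂ :=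
  if i < k then
    Matrix.single ⟨i - 1, by omega⟩ ⟨i, by omega⟩ 1 +
      Matrix.single ⟨2 * k - i, by omega⟩ ⟨2 * k - i + 1, by omega⟩ 1
  else
    (Real.sqrt 2 : ℂ) •
      (Matrix.single ⟨k - 1, by omega⟩ ⟨k, by omega⟩ 1 +
        Matrix.single ⟨k, by omega⟩ ⟨k + 1, by omega⟩ 1)

lemma Omega_mul_self (m : ℕ) : Omega (2*m+1) * Omega (2*m+1) = 1 := by
  ext i j
  simp only [Matrix.mul_apply, Omega, Matrix.of_apply, Matrix.one_apply, ite_mul, zero_mul]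
  obtain ⟨i, hi⟩ := i
  obtain ⟨j, hj⟩ := j
  rw [Finset.sum_eq_single (⟨2*m - i, by omega⟩ : Fin (2*m+1))]
  · simp only [Fin.mk.injEq]
    split_ifs with h1 h2 h3 <;> try omega
    · rw [← pow_add]
      exact Even.neg_one_pow ⟨m, by omega⟩
    · rw [mul_zero]
  · rintro ⟨l, hl⟩ _ hne
    simp only [Fin.mk.injEq, ne_eq] at hne
    split_ifs with h1 h2 <;> simp_all <;> omega
  · simp

lemma stdBasisMatrix_transpose' {n : ℕ} (a b : Fin n) (c : ℂ) :
    (single a b c)ᵀ = single b a c := by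
  ext i j
  simp [Matrix.single, and_comm]

lemma skew (k : ℕ) (a b c d : Fin (2*k+1)) (hab : (b:ℕ) = (a:ℕ) + 1)
    (hcd : (d:ℕ) = (c:ℕ) + 1) (had : (a:ℕ) + (d:ℕ) = 2*k) :
    (single a b (1:ℂ) + single c d 1) * Omega (2*k+1) =
      -(Omega (2*k+1) * (single a b (1:ℂ) + single c d 1)ᵀ) := by
  ext i j
  simp only [Matrix.add_mul, Matrix.mul_add, Matrix.transpose_add, stdBasisMatrix_transpose',
    Matrix.add_apply, Matrix.neg_apply]
  have key : ∀ (x y u v : Fin (2*k+1)) (e : ℂ),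
      (single x y e * Omega (2*k+1)) u v
        = if u = x then e * Omega (2*k+1) y v else 0 := by
    intro x y u v e
    by_cases h : u = x
    · subst h; simp
    · simp [h]
  have key2 : ∀ (x y u v : Fin (2*k+1)) (e : ℂ),
      (Omega (2*k+1) * single x y e) u v
        = if v = y then Omega (2*k+1) u x * e else 0 := by
    intro x y u v e
    by_cases h : v = y
    · subst h; simp
    · simp [h]
  rw [key, key, key2, key2]
  obtain ⟨i, hi⟩ := i; obtain ⟨j, hj⟩ := j
  obtain ⟨a, ha⟩ := a; obtain ⟨b, hb⟩ := b; obtain ⟨c, hc⟩ := c; obtain ⟨d, hd⟩ := d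
  simp only [Omega, Matrix.of_apply, Fin.mk.injEq] at *
  split_ifs <;> (try omega) <;> (try ring_nf) <;>
    first
      | rfl
      | (subst_vars; omega)
      | (rw [show b = i + 1 by omega, pow_succ]; ring)
      | (rw [show d = i + 1 by omega, pow_succ]; ring)

lemma skew_transpose (m : ℕ) (A : Matrix (Fin (2*m+1)) (Fin (2*m+1)) ℂ)
    (hA : A * Omega (2*m+1) = -(Omega (2*m+1) * Aᵀ)) :
    Aᵀ * Omega (2*m+1) = -(Omega (2*m+1) * Aᵀᵀ) := by
  set Ω := Omega (2*m+1)
  have h2 : Ω * Ω = 1 := Omega_mul_self m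
  have h3 : Ω * Aᵀ = -(A * Ω) := by rw [hA, neg_neg]
  rw [Matrix.transpose_transpose]
  calc Aᵀ * Ω = (Ω * Ω) * Aᵀ * Ω := by rw [h2, one_mul]
    _ = Ω * (Ω * Aᵀ) * Ω := by rw [mul_assoc Ω Ω Aᵀ]
    _ = Ω * (-(A * Ω)) * Ω := by rw [h3]
    _ = -(Ω * A * (Ω * Ω)) := by noncomm_ring
    _ = -(Ω * A) := by rw [h2, mul_one]

lemma key_exp (m : ℕ) (A : Matrix (Fin (2*m+1)) (Fin (2*m+1)) ℂ)
    (hA : A * Omega (2*m+1) = -(Omega (2*m+1) * Aᵀ)) (t : ℂ) :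
    NormedSpace.exp (t • A) * Omega (2*m+1) * (NormedSpace.exp (t • A))ᵀ
      = Omega (2*m+1) := by
  set Ω := Omega (2*m+1) with hΩdef
  have h2 : Ω * Ω = 1 := Omega_mul_self m
  have hU : IsUnit Ω := ⟨⟨Ω, Ω, h2, h2⟩, rfl⟩
  have hinv : Ω⁻¹ = Ω := inv_eq_right_inv h2
  have h3 : Ω * Aᵀ = -(A * Ω) := by rw [hA, neg_neg]
  have h1 : t • A = Ω * (-(t • Aᵀ)) * Ω⁻¹ := by
    rw [hinv]
    calc t • A = t • (A * (Ω * Ω)) := by rw [h2, mul_one]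
      _ = t • (-(Ω * Aᵀ) * Ω) := by rw [h3, neg_neg, mul_assoc]
      _ = Ω * (-(t • Aᵀ)) * Ω := by
          simp only [Matrix.mul_neg, Matrix.neg_mul, mul_smul_comm, smul_mul_assoc,
            smul_neg, neg_neg, mul_assoc]
  have e1 : (NormedSpace.exp (t • A))ᵀ = NormedSpace.exp (t • Aᵀ) := by
    rw [← Matrix.exp_transpose, Matrix.transpose_smul]
  have prod1 : NormedSpace.exp (-(t • Aᵀ)) * NormedSpace.exp (t • Aᵀ) = 1 := by
    rw [← Matrix.exp_add_of_commute _ _ ((Commute.refl (t • Aᵀ)).neg_left),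
      neg_add_cancel, NormedSpace.exp_zero]
  rw [e1, h1, Matrix.exp_conj Ω _ hU, hinv]
  calc Ω * NormedSpace.exp (-(t • Aᵀ)) * Ω * Ω * NormedSpace.exp (t • Aᵀ)
      = Ω * NormedSpace.exp (-(t • Aᵀ)) * (Ω * Ω) * NormedSpace.exp (t • Aᵀ) := by
        rw [mul_assoc (Ω * NormedSpace.exp (-(t • Aᵀ))) Ω Ω]
    _ = Ω * (NormedSpace.exp (-(t • Aᵀ)) * NormedSpace.exp (t • Aᵀ)) := by
        rw [h2, mul_one, mul_assoc]
    _ = Ω := by rw [prod1, mul_one]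

/-- For all `i ∈ [1,k]` and `t ∈ ℂ`, `exp(t E_i)` and `exp(t F_i)` (with `F_i = E_iᵀ`)
are orthogonal with respect to `Ω_{2k+1}`. -/
theorem stmt_13 (k : ℕ) (i : ℕ) (h1 : 1 ≤ i) (h2 : i ≤ k) (t : ℂ) :
    NormedSpace.exp (t • EgenB k i h1 h2) * Omega (2 * k + 1) *
        (NormedSpace.exp (t • EgenB k i h1 h2))ᵀ = Omega (2 * k + 1) ∧
    NormedSpace.exp (t • (EgenB k i h1 h2)ᵀ) * Omega (2 * k + 1) *
        (NormedSpace.exp (t • (EgenB k i h1 h2)ᵀ))ᵀ = Omega (2 * k + 1) := by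
  have hA : EgenB k i h1 h2 * Omega (2*k+1) = -(Omega (2*k+1) * (EgenB k i h1 h2)ᵀ) := by
    unfold EgenB
    split_ifs with h
    · exact skew k ⟨i-1, by omega⟩ ⟨i, by omega⟩ ⟨2*k-i, by omega⟩ ⟨2*k-i+1, by omega⟩
        (show i = (i-1) + 1 by omega) (show 2*k-i+1 = (2*k-i) + 1 from rfl)
        (show (i-1) + (2*k-i+1) = 2*k by omega)
    · rw [smul_mul_assoc, Matrix.transpose_smul, mul_smul_comm, ← smul_neg]
      congr 1
      exact skew k ⟨k-1, by omega⟩ ⟨k, by omega⟩ ⟨k, by omega⟩ ⟨k+1, by omega⟩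
        (show k = (k-1) + 1 by omega) (show k+1 = k + 1 from rfl)
        (show (k-1) + (k+1) = 2*k by omega)
  exact ⟨key_exp k _ hA t, key_exp k _ (skew_transpose k _ hA) t⟩
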